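/- Let R = (ZMod 2)[y_1,…,y_n] with ideal I generated by y_i^2 - Σ_{j<i} c_{j,i} y_i y_j, 1 ≤ i ≤ n, and let w = Π_{j=2}^n (1 + Σ_{i<j} c_{i,j} y_i) ∈ R/I. The degree-1 component of w vanishes if and only if Σ_{j=i+1}^n c_{i,j} = 0 in ZMod 2 for every 1 ≤ i ≤ n-1. -/

import Mathlib

open MvPolynomial

/-- The ideal `I = (y_i² - ∑_{j<i} c_{j,i} y_i y_j : 1 ≤ i ≤ n)` in
`(ℤ/2)[y_1, …, y_n]` defining the mod-2 cohomology of a real Bott tower. -/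
noncomputable def bottIdeal (n : ℕ) (c : Fin n → Fin n → ZMod 2) :
    Ideal (MvPolynomial (Fin n) (ZMod 2)) :=
  Ideal.span {p | ∃ i : Fin n,
    p = X i ^ 2 - ∑ j ∈ Finset.univ.filter (fun j => j < i), C (c j i) * (X i * X j)}

/-- The polynomial representative `w = ∏_{j=2}^n (1 + ∑_{i<j} c_{i,j} y_i)` of the
total Stiefel–Whitney class of the real Bott tower. -/
noncomputable def bottSW (n : ℕ) (c : Fin n → Fin n → ZMod 2) :
    MvPolynomial (Fin n) (ZMod 2) :=
  ∏ j ∈ Finset.univ.filter (fun j : Fin n => 0 < j.val),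
    (1 + ∑ i ∈ Finset.univ.filter (fun i => i < j), C (c i j) * X i)

lemma aux_deg_one {σ : Type*} (d : σ →₀ ℕ) (h : d.degree = 1) :
    ∃ i, d = Finsupp.single i 1 := by
  have hne : d ≠ 0 := by
    intro h0; rw [h0, map_zero] at h; exact one_ne_zero h.symm
  obtain ⟨i, hi⟩ := Finsupp.ne_iff.mp hne
  simp only [Finsupp.coe_zero, Pi.zero_apply] at hi
  have h1 : d i = 1 := le_antisymm (h ▸ Finsupp.le_degree i d) (Nat.one_le_iff_ne_zero.mpr hi)
  have hle : Finsupp.single i 1 ≤ d := Finsupp.single_le_iff.mpr (by omega)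
  refine ⟨i, ?_⟩
  have hd : d = Finsupp.single i 1 + (d - Finsupp.single i 1) :=
    (add_tsub_cancel_of_le hle).symm
  have hdeg : (d - Finsupp.single i 1).degree = 0 := by
    have := congrArg Finsupp.degree hd
    rw [Finsupp.degree_eq_weight_one] at this ⊢
    rw [map_add] at this
    have hs : (Finsupp.single i 1).degree = 1 := by
      simp [Finsupp.degree_single]
    rw [Finsupp.degree_eq_weight_one] at hs h
    omega
  rw [Finsupp.degree_eq_zero_iff] at hdeg
  rw [hd, hdeg, add_zero]

lemma aux_coeff_single_mul {σ R : Type*} [DecidableEq σ] [CommSemiring R]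
    (p q : MvPolynomial σ R) (i : σ) :
    coeff (Finsupp.single i 1) (p * q) =
      coeff 0 p * coeff (Finsupp.single i 1) q + coeff (Finsupp.single i 1) p * coeff 0 q := by
  rw [coeff_mul, Finsupp.antidiagonal_single, Finset.sum_map]
  simp [Finset.Nat.antidiagonal_succ, Finset.sum_insert, Prod.map]

lemma aux_coeff_zero_prod {σ R ι : Type*} [CommSemiring R] (s : Finset ι)
    (g : ι → MvPolynomial σ R) (hg : ∀ j ∈ s, coeff 0 (g j) = 0) :
    coeff 0 (∏ j ∈ s, (1 + g j)) = 1 := by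
  classical
  induction s using Finset.induction_on with
  | empty => simp
  | insert _ _ hx ih =>
    rename_i a t
    rw [Finset.prod_insert hx, coeff_mul, Finsupp.antidiagonal_zero, Finset.sum_singleton]
    rw [ih (fun j hj => hg j (Finset.mem_insert_of_mem hj))]
    simp [hg a (Finset.mem_insert_self a t)]

lemma aux_coeff_single_prod {σ R ι : Type*} [DecidableEq σ] [CommSemiring R] (s : Finset ι)
    (g : ι → MvPolynomial σ R) (hg : ∀ j ∈ s, coeff 0 (g j) = 0) (i : σ) :
    coeff (Finsupp.single i 1) (∏ j ∈ s, (1 + g j)) =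
      ∑ j ∈ s, coeff (Finsupp.single i 1) (g j) := by
  classical
  induction s using Finset.induction_on with
  | empty => simp [coeff_one, eq_comm, Finsupp.single_eq_zero]
  | insert _ _ hx ih =>
    rename_i a t
    rw [Finset.prod_insert hx, aux_coeff_single_mul, Finset.sum_insert hx,
      ih (fun j hj => hg j (Finset.mem_insert_of_mem hj)),
      aux_coeff_zero_prod t g (fun j hj => hg j (Finset.mem_insert_of_mem hj))]
    simp [hg a (Finset.mem_insert_self a t), coeff_one, add_comm, eq_comm,
      Finsupp.single_eq_zero]

lemma aux_mem_coeff {n : ℕ} {c : Fin n → Fin n → ZMod 2}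
    {q : MvPolynomial (Fin n) (ZMod 2)} (hq : q ∈ bottIdeal n c) :
    ∀ d : Fin n →₀ ℕ, d.degree ≤ 1 → coeff d q = 0 := by
  classical
  induction hq using Submodule.span_induction with
  | mem x hx =>
    obtain ⟨i, rfl⟩ := hx
    intro d hd
    have h2 : (X i ^ 2 - ∑ j ∈ Finset.univ.filter (fun j => j < i),
        C (c j i) * (X i * X j) : MvPolynomial (Fin n) (ZMod 2)).IsHomogeneous 2 := by
      apply MvPolynomial.IsHomogeneous.sub
      · simpa using (isHomogeneous_X (ZMod 2) i).pow 2
      · apply MvPolynomial.IsHomogeneous.sum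
        intro j _
        simpa using ((isHomogeneous_C _ (c j i)).mul
          ((isHomogeneous_X (ZMod 2) i).mul (isHomogeneous_X (ZMod 2) j)))
    exact h2.coeff_eq_zero (by omega)
  | zero => simp
  | add x y _ _ hx hy => intro d hd; rw [coeff_add, hx d hd, hy d hd, add_zero]
  | smul r x _ hx =>
    intro d hd
    rw [smul_eq_mul, coeff_mul]
    apply Finset.sum_eq_zero
    intro ab hab
    rw [Finset.HasAntidiagonal.mem_antidiagonal] at hab
    have hle : ab.2 ≤ d := hab ▸ le_add_self
    have hdle : ab.2.degree ≤ d.degree := by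
      rw [Finsupp.degree_eq_weight_one]
      obtain ⟨e, he⟩ := exists_add_of_le hle
      rw [he, map_add]; exact Nat.le_add_right _ _
    rw [hx ab.2 (le_trans hdle hd), mul_zero]

lemma aux_coeff_bottSW (n : ℕ) (c : Fin n → Fin n → ZMod 2) (i : Fin n) :
    coeff (Finsupp.single i 1) (bottSW n c) =
      ∑ j ∈ Finset.univ.filter (fun j => i < j), c i j := by
  classical
  have hg : ∀ j ∈ Finset.univ.filter (fun j : Fin n => 0 < j.val),
      coeff (0 : Fin n →₀ ℕ)
        (∑ i' ∈ Finset.univ.filter (fun i' => i' < j), C (c i' j) * X i') = 0 := by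
    intro j _
    rw [coeff_sum]
    apply Finset.sum_eq_zero
    intro i' _
    simp [coeff_mul, coeff_X']
  rw [bottSW, aux_coeff_single_prod _ _ hg i]
  have hterm : ∀ j : Fin n,
      coeff (Finsupp.single i 1)
        (∑ i' ∈ Finset.univ.filter (fun i' => i' < j), C (c i' j) * X i') =
      if i < j then c i j else 0 := by
    intro j
    rw [coeff_sum]
    have hstep : ∀ i' ∈ Finset.univ.filter (fun i' => i' < j),
        coeff (Finsupp.single i 1) (C (c i' j) * X i')
          = if i' = i then c i' j else 0 := by
      intro i' _
      rcases eq_or_ne i' i with rfl | hne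
      · simp [coeff_C_mul, coeff_X]
      · simp [coeff_C_mul, coeff_X', Finsupp.single_eq_single_iff, hne]
    rw [Finset.sum_congr rfl hstep, Finset.sum_ite_eq' ]
    simp [Finset.mem_filter]
  calc ∑ j ∈ Finset.univ.filter (fun j : Fin n => 0 < j.val),
        coeff (Finsupp.single i 1)
          (∑ i' ∈ Finset.univ.filter (fun i' => i' < j), C (c i' j) * X i')
      = ∑ j ∈ Finset.univ.filter (fun j : Fin n => 0 < j.val),
          if i < j then c i j else 0 := Finset.sum_congr rfl (fun j _ => hterm j)
    _ = ∑ j ∈ Finset.univ.filter (fun j => i < j), c i j := by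
        rw [Finset.sum_ite, Finset.sum_const_zero, add_zero, Finset.filter_filter]
        apply Finset.sum_congr _ (fun _ _ => rfl)
        ext j
        simp only [Finset.mem_filter, Finset.mem_univ, true_and, Fin.lt_def]
        omega

theorem stmt_9 (n : ℕ) (c : Fin n → Fin n → ZMod 2) :
    Ideal.Quotient.mk (bottIdeal n c)
        (MvPolynomial.homogeneousComponent 1 (bottSW n c)) = 0 ↔
      ∀ i : Fin n, i.val + 1 < n →
        (∑ j ∈ Finset.univ.filter (fun j => i < j), c i j) = 0 := by
  classical
  rw [Ideal.Quotient.eq_zero_iff_mem]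
  constructor
  · intro hmem i _
    have := aux_mem_coeff hmem (Finsupp.single i 1) (by
      simp [Finsupp.degree_single])
    rw [coeff_homogeneousComponent] at this
    rw [← aux_coeff_bottSW n c i]
    simpa [Finsupp.degree_single] using this
  · intro h
    have hz : MvPolynomial.homogeneousComponent 1 (bottSW n c) = 0 := by
      ext d
      rw [coeff_homogeneousComponent, coeff_zero]
      split_ifs with hd
      · obtain ⟨i, rfl⟩ := aux_deg_one d hd
        rw [aux_coeff_bottSW n c i]
        by_cases hi : i.val + 1 < n
        · exact h i hi
        · have : Finset.univ.filter (fun j => i < j) = (∅ : Finset (Fin n)) := by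
            ext j
            simp only [Finset.mem_filter, Finset.mem_univ, true_and, Finset.notMem_empty,
              iff_false]
            intro hij
            have := j.isLt
            omega
          rw [this, Finset.sum_empty]
      · rfl
    rw [hz]
    exact Submodule.zero_mem _
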